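/- For every integer l ≥ 3 there is a constant C_l > 0 such that for all t ≥ 1 and all x ∈ [0, π], Σ_{n∈ℤ, n≠0} (1 + |x − 2πn|·t)^{−l} ≤ C_l · (1 + x t)^{−l/2} · t^{−l/2}. -/

import Mathlib

open Real

theorem stmt15 : ∀ l : ℕ, 3 ≤ l → ∃ C : ℝ, 0 < C ∧
    ∀ t : ℝ, 1 ≤ t → ∀ x ∈ Set.Icc (0 : ℝ) Real.pi,
      ∑' n : {n : ℤ // n ≠ 0}, ((1 + |x - 2 * Real.pi * (n : ℤ)| * t) ^ l)⁻¹
        ≤ C * (1 + x * t) ^ (-(l : ℝ) / 2) * t ^ (-(l : ℝ) / 2) := by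
  intro l hl
  have hsum : Summable (fun n : ℤ => 1 / (n : ℝ) ^ 2) := by
    rw [Real.summable_one_div_int_pow]; norm_num
  set S : ℝ := ∑' n : ℤ, 1 / (n : ℝ) ^ 2 with hSdef
  have hSpos : 0 < S := hsum.tsum_pos (fun n => by positivity) 1 (by norm_num)
  have hπ := Real.pi_pos
  refine ⟨(1 + π) ^ ((l : ℝ) / 2) * (π⁻¹ ^ l * S), by positivity, ?_⟩
  intro t ht x hx
  obtain ⟨hx0, hxπ⟩ := hx
  have ht0 : (0 : ℝ) < t := lt_of_lt_of_le one_pos ht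
  set g : ℤ → ℝ := fun n => π⁻¹ ^ l * t⁻¹ ^ l * (1 / (n : ℝ) ^ 2) with hg
  have hgsum : Summable g := hsum.mul_left _
  have hbound : ∀ n : {n : ℤ // n ≠ 0},
      ((1 + |x - 2 * Real.pi * ((n : ℤ) : ℝ)| * t) ^ l)⁻¹ ≤ g (n : ℤ) := by
    rintro ⟨n, hn⟩
    have hn' : ((n : ℤ) : ℝ) ≠ 0 := Int.cast_ne_zero.mpr hn
    have h1 : (1:ℝ) ≤ |(n:ℝ)| := by
      rw [← Int.cast_abs]; exact_mod_cast Int.one_le_abs hn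
    have habs : π * |(n:ℝ)| ≤ |x - 2 * π * n| := by
      have h2 : |(2 * π * (n:ℝ))| - |x| ≤ |2 * π * n - x| := abs_sub_abs_le_abs_sub _ _
      have h3 : |x - 2*π*(n:ℝ)| = |2*π*n - x| := abs_sub_comm _ _
      have h4 : |(2 * π * (n:ℝ))| = 2 * π * |(n:ℝ)| := by
        rw [abs_mul, abs_of_pos (by positivity : (0:ℝ) < 2*π)]
      have h5 : |x| ≤ π := abs_le.mpr ⟨by linarith, hxπ⟩
      nlinarith
    have hkey : π ^ l * (n:ℝ)^2 * t ^ l ≤ (1 + |x - 2 * π * (n:ℝ)| * t) ^ l := by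
      have hn2 : (n:ℝ)^2 ≤ |(n:ℝ)| ^ l := by
        calc (n:ℝ)^2 = |(n:ℝ)|^2 := (sq_abs _).symm
        _ ≤ |(n:ℝ)| ^ l := pow_le_pow_right₀ h1 (by omega)
      calc π ^ l * (n:ℝ)^2 * t ^ l ≤ π ^ l * |(n:ℝ)| ^ l * t ^ l := by
            gcongr
        _ = (π * |(n:ℝ)| * t) ^ l := by rw [mul_pow, mul_pow]
        _ ≤ (1 + |x - 2 * π * (n:ℝ)| * t) ^ l := by
            apply pow_le_pow_left₀ (by positivity)
            nlinarith [mul_le_mul_of_nonneg_right habs ht0.le]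
    have hpos : (0:ℝ) < π ^ l * (n:ℝ)^2 * t ^ l := by positivity
    calc ((1 + |x - 2 * π * (n:ℝ)| * t) ^ l)⁻¹ ≤ (π ^ l * (n:ℝ)^2 * t ^ l)⁻¹ := by
          exact inv_anti₀ hpos hkey
      _ = g n := by
          simp only [hg, inv_pow, one_div]
          rw [mul_inv, mul_inv]; ring
  have hf : Summable (fun n : {n : ℤ // n ≠ 0} =>
      ((1 + |x - 2 * Real.pi * ((n : ℤ) : ℝ)| * t) ^ l)⁻¹) := by
    apply Summable.of_nonneg_of_le (fun n => by positivity) hbound (hgsum.subtype _)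
  have hg0 : ∀ n : ℤ, 0 ≤ g n := fun n => by positivity
  have step1 : ∑' n : {n : ℤ // n ≠ 0}, ((1 + |x - 2 * Real.pi * ((n : ℤ) : ℝ)| * t) ^ l)⁻¹
      ≤ π⁻¹ ^ l * t⁻¹ ^ l * S := by
    calc ∑' n : {n : ℤ // n ≠ 0}, ((1 + |x - 2 * Real.pi * ((n : ℤ) : ℝ)| * t) ^ l)⁻¹
        ≤ ∑' n : {n : ℤ // n ≠ 0}, g n := Summable.tsum_le_tsum hbound hf (hgsum.subtype _)
      _ ≤ ∑' n : ℤ, g n := Summable.tsum_subtype_le g _ hg0 hgsum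
      _ = π⁻¹ ^ l * t⁻¹ ^ l * S := by rw [hg, tsum_mul_left]
  refine step1.trans ?_
  -- final comparison
  set p : ℝ := (l : ℝ) / 2 with hp
  have hA : (0:ℝ) < 1 + x * t := by positivity
  have hA1 : 1 + x * t ≤ (1 + π) * t := by nlinarith
  have hAp : (1 + x * t) ^ p ≤ (1 + π) ^ p * t ^ p := by
    rw [← Real.mul_rpow (by positivity) ht0.le]
    exact Real.rpow_le_rpow hA.le hA1 (by positivity)
  have htl : t ^ p * t ^ p = (t ^ l : ℝ) := by
    rw [← Real.rpow_add ht0, hp, add_halves, Real.rpow_natCast]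
  have hrw : (1 + x * t) ^ (-(l : ℝ) / 2) * t ^ (-(l : ℝ) / 2)
      = ((1 + x * t) ^ p * t ^ p)⁻¹ := by
    rw [mul_inv, hp, neg_div, Real.rpow_neg hA.le, Real.rpow_neg ht0.le]
  have hineq : ((1 + π) ^ p * (t ^ l : ℝ))⁻¹ ≤ ((1 + x * t) ^ p * t ^ p)⁻¹ := by
    apply inv_anti₀ (by positivity)
    calc (1 + x * t) ^ p * t ^ p ≤ (1 + π) ^ p * t ^ p * t ^ p := by
          gcongr
      _ = (1 + π) ^ p * (t ^ l : ℝ) := by rw [mul_assoc, htl]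
  have hC0 : (0:ℝ) < (1 + π) ^ p := Real.rpow_pos_of_pos (by positivity) p
  calc π⁻¹ ^ l * t⁻¹ ^ l * S
      = ((1 + π) ^ p * (π⁻¹ ^ l * S)) * ((1 + π) ^ p * (t ^ l : ℝ))⁻¹ := by
        rw [mul_inv, inv_pow]; field_simp; rw [← mul_pow]; simp [ht0.ne']
    _ ≤ ((1 + π) ^ p * (π⁻¹ ^ l * S)) * ((1 + x * t) ^ p * t ^ p)⁻¹ := by
        apply mul_le_mul_of_nonneg_left hineq (by positivity)
    _ = (1 + π) ^ ((l : ℝ) / 2) * (π⁻¹ ^ l * S) * (1 + x * t) ^ (-(l : ℝ) / 2) * t ^ (-(l : ℝ) / 2) := by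
        rw [mul_assoc _ ((1 + x * t) ^ (-(l : ℝ) / 2)) _, hrw, hp]
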